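/- Asymptotic formula: for x ≠ 0 and x ∉ {1, q, q², ...} (so y/x avoids poles), lim_{n→∞} p_n^{(α,β)}(x,y) / ((-x)^n q^{n(1-n)/2}) = (y/x;q)_∞ / (αq;q)_∞. -/

import Mathlib

open Finset Filter Real

/-- q-shifted factorial (a;q)_n -/
noncomputable def qPoch (a q : ℝ) (n : ℕ) : ℝ := ∏ j ∈ Finset.range n, (1 - a * q ^ j)

/-- infinite q-shifted factorial (a;q)_∞ -/
noncomputable def qPochInf (a q : ℝ) : ℝ := ∏' j : ℕ, (1 - a * q ^ j)

/-- q-binomial coefficient [n choose k]_q -/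
noncomputable def qBinom (q : ℝ) (n k : ℕ) : ℝ :=
  qPoch q q n / (qPoch q q k * qPoch q q (n - k))

/-- q-derivative -/
noncomputable def Dq (q : ℝ) (f : ℝ → ℝ) (x : ℝ) : ℝ := (f x - f (q * x)) / x

/-- bivariate q-Laguerre polynomial L_n^{(α)}(x,y) -/
noncomputable def qLaguerre (q α : ℝ) (n : ℕ) (x y : ℝ) : ℝ :=
  ∑ k ∈ Finset.range (n + 1),
    (-1 : ℝ) ^ k * qBinom q n k * (q ^ ((k : ℝ) ^ 2 + (k : ℝ) * α)) /
      qPoch (q ^ (α + 1)) q k * x ^ k * y ^ (n - k)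

/-- bivariate little q-Jacobi polynomial p_n^{(α,β)}(x,y) -/
noncomputable def littleQJacobi (q a b : ℝ) (n : ℕ) (x y : ℝ) : ℝ :=
  ∑ k ∈ Finset.range (n + 1),
    (-1 : ℝ) ^ k * (q ^ (((k : ℝ) * ((k : ℝ) + 1 - 2 * (n : ℝ))) / 2)) * qBinom q n k *
      (qPoch (a * b * q ^ (n + 1)) q k / qPoch (a * q) q k) * x ^ k * y ^ (n - k)

lemma qPoch_zero (a q : ℝ) : qPoch a q 0 = 1 := Finset.prod_range_zero _

lemma qPoch_succ (a q : ℝ) (n : ℕ) : qPoch a q (n+1) = qPoch a q n * (1 - a * q ^ n) :=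
  Finset.prod_range_succ _ _

lemma qPoch_add (a q : ℝ) (m k : ℕ) :
    qPoch a q (m + k) = qPoch a q m * ∏ j ∈ Finset.range k, (1 - a * q ^ (m + j)) :=
  Finset.prod_range_add _ _ _

lemma weierstrass (u : ℕ → ℝ) (hu0 : ∀ j, 0 ≤ u j) (hu1 : ∀ j, u j ≤ 1) (k : ℕ) :
    1 - ∑ j ∈ Finset.range k, u j ≤ ∏ j ∈ Finset.range k, (1 - u j) := by
  induction k with
  | zero => simp
  | succ k ih =>
    rw [Finset.sum_range_succ, Finset.prod_range_succ]
    have hp : (0:ℝ) ≤ ∏ j ∈ Finset.range k, (1 - u j) :=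
      Finset.prod_nonneg fun j _ => by linarith [hu1 j]
    have h1 : (1 - ∑ j ∈ Finset.range k, u j) * (1 - u k) ≤ (∏ j ∈ Finset.range k, (1 - u j)) * (1 - u k) :=
      mul_le_mul_of_nonneg_right ih (by linarith [hu1 k])
    have h2 : (0:ℝ) ≤ ∑ j ∈ Finset.range k, u j := Finset.sum_nonneg fun j _ => hu0 j
    nlinarith [hu0 k, hu1 k]

lemma abs_prod_one_add_sub_one_le (v : ℕ → ℝ) (s : Finset ℕ) :
    |(∏ j ∈ s, (1 + v j)) - 1| ≤ (∏ j ∈ s, (1 + |v j|)) - 1 := by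
  induction s using Finset.cons_induction with
  | empty => simp
  | cons a s ha ih =>
    rw [Finset.prod_cons, Finset.prod_cons]
    have hQ : (1:ℝ) ≤ ∏ j ∈ s, (1 + |v j|) := by
      have := Finset.prod_le_prod (s := s) (f := fun _ => (1:ℝ)) (g := fun j => 1 + |v j|)
        (fun j _ => by norm_num) (fun j _ => le_add_of_nonneg_right (abs_nonneg (v j)))
      simpa using this
    have key : (1 + v a) * ∏ j ∈ s, (1 + v j) - 1
        = (1 + v a) * ((∏ j ∈ s, (1 + v j)) - 1) + v a := by ring
    rw [key]
    calc |(1 + v a) * ((∏ j ∈ s, (1 + v j)) - 1) + v a|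
        ≤ |1 + v a| * |(∏ j ∈ s, (1 + v j)) - 1| + |v a| := by
          rw [← abs_mul]; exact abs_add_le _ _
      _ ≤ (1 + |v a|) * ((∏ j ∈ s, (1 + |v j|)) - 1) + |v a| := by
          have h1 : |1 + v a| ≤ 1 + |v a| := (abs_add_le 1 (v a)).trans (by simp)
          have h2 := abs_nonneg ((∏ j ∈ s, (1 + v j)) - 1)
          nlinarith [abs_nonneg (v a)]
      _ = (1 + |v a|) * (∏ j ∈ s, (1 + |v j|)) - 1 := by ring

lemma prod_one_add_le_exp (v : ℕ → ℝ) (s : Finset ℕ) :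
    (∏ j ∈ s, (1 + |v j|)) ≤ Real.exp (∑ j ∈ s, |v j|) := by
  rw [Real.exp_sum]
  exact Finset.prod_le_prod (fun j _ => by linarith [abs_nonneg (v j)])
    (fun j _ => by linarith [Real.add_one_le_exp (|v j|)])

lemma sum_geom_le (c q : ℝ) (hc : 0 ≤ c) (hq : 0 ≤ q) (hq1 : q < 1) (s : Finset ℕ) :
    ∑ j ∈ s, c * q ^ j ≤ c / (1 - q) := by
  have hsum : Summable (fun j : ℕ => c * q ^ j) :=
    (summable_geometric_of_lt_one hq hq1).mul_left c
  calc ∑ j ∈ s, c * q ^ j ≤ ∑' j : ℕ, c * q ^ j :=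
        Summable.sum_le_tsum s (fun j _ => by positivity) hsum
    _ = c / (1 - q) := by
        rw [tsum_mul_left, tsum_geometric_of_lt_one hq hq1, div_eq_mul_inv]

lemma abs_log_le {y : ℝ} (h : 1/2 ≤ y) : |Real.log y| ≤ 2 * |y - 1| := by
  have hy : 0 < y := by linarith
  rcases le_or_gt 1 y with h1 | h1
  · rw [abs_of_nonneg (Real.log_nonneg h1), abs_of_nonneg (by linarith)]
    linarith [Real.log_le_sub_one_of_pos hy]
  · have hlog : Real.log y < 0 := Real.log_neg hy h1
    rw [abs_of_neg hlog, abs_of_neg (by linarith)]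
    have hinv : Real.log y⁻¹ ≤ y⁻¹ - 1 := Real.log_le_sub_one_of_pos (by positivity)
    rw [Real.log_inv] at hinv
    have : y⁻¹ - 1 = (1 - y) / y := by field_simp
    rw [this] at hinv
    have : (1 - y) / y ≤ 2 * (1 - y) := by
      rw [div_le_iff₀ hy]
      nlinarith
    linarith

lemma multipliable_one_sub {q : ℝ} (hq : 0 < q) (hq1 : q < 1) (c : ℝ) :
    Multipliable (fun j : ℕ => 1 - c * q ^ j) := by
  by_cases hz : ∃ j : ℕ, 1 - c * q ^ j = 0
  · obtain ⟨j0, hj0⟩ := hz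
    refine ⟨0, ?_⟩
    have hev : ∀ᶠ s : Finset ℕ in atTop, (∏ i ∈ s, (1 - c * q ^ i)) = 0 := by
      filter_upwards [Filter.eventually_ge_atTop ({j0} : Finset ℕ)] with s hs
      exact Finset.prod_eq_zero (hs (Finset.mem_singleton_self j0)) hj0
    exact Filter.Tendsto.congr' (Filter.EventuallyEq.symm hev) tendsto_const_nhds
  · push_neg at hz
    -- choose m₀ with |c| * q ^ m₀ ≤ 1/2
    have hq0 : Filter.Tendsto (fun n : ℕ => |c| * q ^ n) atTop (nhds 0) := by
      simpa using (tendsto_pow_atTop_nhds_zero_of_lt_one hq.le hq1).const_mul |c|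
    obtain ⟨m₀, hm₀⟩ := (hq0.eventually (eventually_le_nhds (by norm_num : (0:ℝ) < 1/2))).exists
    set g : ℕ → ℝ := fun n => 1 - c * q ^ (n + m₀) with hg
    have hgpos : ∀ n, 0 < g n := by
      intro n
      have : |c * q ^ (n + m₀)| ≤ 1/2 := by
        rw [abs_mul, abs_pow, abs_of_pos hq, pow_add]
        calc |c| * (q ^ n * q ^ m₀) ≤ |c| * (1 * q ^ m₀) := by
              gcongr
              exact pow_le_one₀ hq.le hq1.le
          _ = |c| * q ^ m₀ := by ring
          _ ≤ 1/2 := hm₀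
      have := abs_le.1 this
      simp only [hg]; linarith [this.2]
    have hsum : Summable fun n => Real.log (g n) := by
      apply Summable.of_norm_bounded (g := fun n => 2 * (|c| * q ^ m₀) * q ^ n)
        (((summable_geometric_of_lt_one hq.le hq1).mul_left _))
      intro n
      have h2 : 1/2 ≤ g n := by
        have : |c * q ^ (n + m₀)| ≤ 1/2 := by
          rw [abs_mul, abs_pow, abs_of_pos hq, pow_add]
          calc |c| * (q ^ n * q ^ m₀) ≤ |c| * (1 * q ^ m₀) := by
                gcongr
                exact pow_le_one₀ hq.le hq1.le
            _ = |c| * q ^ m₀ := by ring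
            _ ≤ 1/2 := hm₀
        have := (abs_le.1 this).2
        simp only [hg]; linarith
      calc ‖Real.log (g n)‖ = |Real.log (g n)| := rfl
        _ ≤ 2 * |g n - 1| := abs_log_le h2
        _ = 2 * (|c| * q ^ (n + m₀)) := by
            rw [hg]
            have : (1 - c * q ^ (n + m₀)) - 1 = -(c * q ^ (n + m₀)) := by ring
            rw [this, abs_neg, abs_mul, abs_pow, abs_of_pos hq]
        _ ≤ 2 * (|c| * q ^ m₀) * q ^ n := by
            rw [pow_add]; ring_nf; linarith
    have hmult : Multipliable g :=
      Real.multipliable_of_summable_log hgpos hsum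
    obtain ⟨P, hP⟩ := hmult
    exact ⟨_, HasProd.prod_range_mul (f := fun j : ℕ => 1 - c * q ^ j) (k := m₀) hP⟩

lemma tendsto_qPoch {q : ℝ} (hq : 0 < q) (hq1 : q < 1) (c : ℝ) :
    Filter.Tendsto (fun n => qPoch c q n) atTop (nhds (qPochInf c q)) :=
  Multipliable.tendsto_prod_tprod_nat (multipliable_one_sub hq hq1 c)

lemma qPoch_eq_zero {q c : ℝ} {j0 k : ℕ} (hj0 : 1 - c * q ^ j0 = 0) (hk : j0 < k) :
    qPoch c q k = 0 :=
  Finset.prod_eq_zero (Finset.mem_range.2 hk) hj0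

lemma qPochInf_eq_zero {q : ℝ} (hq : 0 < q) (hq1 : q < 1) {c : ℝ} {j0 : ℕ}
    (hj0 : 1 - c * q ^ j0 = 0) : qPochInf c q = 0 := by
  have h1 := tendsto_qPoch hq hq1 c
  have h2 : Filter.Tendsto (fun n => qPoch c q n) atTop (nhds 0) := by
    apply Filter.Tendsto.congr' _ (tendsto_const_nhds (x := (0:ℝ)))
    filter_upwards [Filter.eventually_gt_atTop j0] with n hn
    exact (qPoch_eq_zero hj0 hn).symm
  exact (tendsto_nhds_unique h1 h2)

lemma qPoch_q_pos {q : ℝ} (hq : 0 < q) (hq1 : q < 1) (n : ℕ) : 0 < qPoch q q n := by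
  apply Finset.prod_pos
  intro j _
  have : q * q ^ j ≤ q * 1 := by
    gcongr
    exact pow_le_one₀ hq.le hq1.le
  simp only [sub_pos]
  calc q * q ^ j ≤ q * 1 := this
    _ < 1 := by linarith

lemma qPoch_q_le_one {q : ℝ} (hq : 0 < q) (hq1 : q < 1) (n : ℕ) : qPoch q q n ≤ 1 := by
  apply Finset.prod_le_one
  · intro j _
    have : q * q ^ j ≤ q * 1 := by
      gcongr
      exact pow_le_one₀ hq.le hq1.le
    simp only [sub_nonneg]
    calc q * q ^ j ≤ q * 1 := this
      _ ≤ 1 := by linarith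
  · intro j _
    have : 0 < q * q ^ j := by positivity
    linarith

lemma abs_qPoch_sub_one_le {q : ℝ} (hq : 0 < q) (hq1 : q < 1) (c : ℝ) (n : ℕ) :
    |qPoch c q n - 1| ≤ Real.exp (|c| / (1 - q)) - 1 := by
  have h1 : qPoch c q n = ∏ j ∈ Finset.range n, (1 + (fun j => -(c * q ^ j)) j) := by
    unfold qPoch; apply Finset.prod_congr rfl; intro j _; ring
  rw [h1]
  calc |(∏ j ∈ Finset.range n, (1 + (fun j => -(c * q ^ j)) j)) - 1|
      ≤ (∏ j ∈ Finset.range n, (1 + |(fun j => -(c * q ^ j)) j|)) - 1 :=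
        abs_prod_one_add_sub_one_le _ _
    _ ≤ Real.exp (∑ j ∈ Finset.range n, |(fun j => -(c * q ^ j)) j|) - 1 := by
        linarith [prod_one_add_le_exp (fun j => -(c * q ^ j)) (Finset.range n)]
    _ ≤ Real.exp (|c| / (1 - q)) - 1 := by
        have heq : ∀ j : ℕ, |(fun j => -(c * q ^ j)) j| = |c| * q ^ j := by
          intro j; simp [abs_mul, abs_pow, abs_of_pos hq]
        rw [Finset.sum_congr rfl (fun j _ => heq j)]
        have := sum_geom_le |c| q (abs_nonneg c) hq.le hq1 (Finset.range n)
        have := Real.exp_le_exp.2 this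
        linarith

lemma abs_qPoch_le {q : ℝ} (hq : 0 < q) (hq1 : q < 1) (c : ℝ) (n : ℕ) :
    |qPoch c q n| ≤ Real.exp (|c| / (1 - q)) := by
  have h := abs_qPoch_sub_one_le hq hq1 c n
  have := abs_sub_abs_le_abs_sub (qPoch c q n) 1
  simp only [abs_one] at this
  linarith

/-- key lower bound: nonzero values of qPoch c q are uniformly bounded below -/
lemma qPoch_lower {q : ℝ} (hq : 0 < q) (hq1 : q < 1) (c : ℝ) :
    ∃ ε > 0, ∀ k, qPoch c q k = 0 ∨ ε ≤ |qPoch c q k| := by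
  have hq0 : Filter.Tendsto (fun n : ℕ => |c| * q ^ n / (1 - q)) atTop (nhds 0) := by
    have : Filter.Tendsto (fun n : ℕ => |c| * q ^ n) atTop (nhds 0) := by
      simpa using (tendsto_pow_atTop_nhds_zero_of_lt_one hq.le hq1).const_mul |c|
    simpa using this.div_const (1 - q)
  obtain ⟨m₀, hm₀⟩ := (hq0.eventually (eventually_le_nhds (by norm_num : (0:ℝ) < 1/2))).exists
  -- for t : tail product bound
  have tail_bd : ∀ t : ℕ, 1/2 ≤ |∏ j ∈ Finset.range t, (1 - c * q ^ (m₀ + j))| := by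
    intro t
    have hstep : ∀ j : ℕ, |c| * q ^ (m₀ + j) ≤ 1/2 := by
      intro j
      have h1 : |c| * q ^ m₀ / (1 - q) ≤ 1/2 := hm₀
      have h2 : |c| * q ^ m₀ ≤ (1 - q) / 2 := by
        rw [div_le_iff₀ (by linarith : (0:ℝ) < 1 - q)] at h1
        linarith
      calc |c| * q ^ (m₀ + j) ≤ |c| * q ^ m₀ := by
            rw [pow_add]
            have : q ^ m₀ * q ^ j ≤ q ^ m₀ * 1 := by
              gcongr; exact pow_le_one₀ hq.le hq1.le
            nlinarith [abs_nonneg c]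
        _ ≤ (1 - q) / 2 := h2
        _ ≤ 1/2 := by linarith
    have h3 : ∏ j ∈ Finset.range t, (1 - |c| * q ^ (m₀ + j))
        ≤ |∏ j ∈ Finset.range t, (1 - c * q ^ (m₀ + j))| := by
      rw [Finset.abs_prod]
      apply Finset.prod_le_prod
      · intro j _; linarith [hstep j]
      · intro j _
        have := abs_sub_abs_le_abs_sub (1:ℝ) (c * q ^ (m₀ + j))
        simp only [abs_one] at this
        rw [abs_mul, abs_pow, abs_of_pos hq] at this
        linarith
    have h4 : 1 - ∑ j ∈ Finset.range t, |c| * q ^ (m₀ + j)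
        ≤ ∏ j ∈ Finset.range t, (1 - |c| * q ^ (m₀ + j)) :=
      weierstrass _ (fun j => by positivity) (fun j => by linarith [hstep j]) t
    have h5 : ∑ j ∈ Finset.range t, |c| * q ^ (m₀ + j) ≤ |c| * q ^ m₀ / (1 - q) := by
      have : ∀ j : ℕ, |c| * q ^ (m₀ + j) = (|c| * q ^ m₀) * q ^ j := by
        intro j; rw [pow_add]; ring
      rw [Finset.sum_congr rfl (fun j _ => this j)]
      have := sum_geom_le (|c| * q ^ m₀) q (by positivity) hq.le hq1 (Finset.range t)
      exact this
    linarith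
  -- take min over k ≤ m₀
  set w : ℕ → ℝ := fun k => if qPoch c q k = 0 then 1 else |qPoch c q k| with hw
  have hwpos : ∀ k, 0 < w k := by
    intro k
    by_cases h : qPoch c q k = 0 <;> simp [hw, h, abs_pos]
  set ε := (Finset.range (m₀ + 1)).inf' ⟨0, Finset.mem_range.2 (Nat.succ_pos _)⟩ w with hε
  have hεpos : 0 < ε := by
    rw [hε]; apply (Finset.lt_inf'_iff _).2
    exact fun k _ => hwpos k
  refine ⟨ε/2, by linarith, ?_⟩
  intro k
  rcases le_or_gt k m₀ with hk | hk
  · by_cases h : qPoch c q k = 0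
    · exact Or.inl h
    · right
      have h1 : ε ≤ w k := Finset.inf'_le _ (Finset.mem_range.2 (by omega))
      rw [hw] at h1; simp only [h, if_false] at h1
      linarith
  · obtain ⟨t, rfl⟩ : ∃ t, k = m₀ + t := ⟨k - m₀, by omega⟩
    rw [qPoch_add]
    by_cases h : qPoch c q m₀ = 0
    · exact Or.inl (by rw [h, zero_mul])
    · right
      rw [abs_mul]
      have h1 : ε ≤ |qPoch c q m₀| := by
        have h2 : ε ≤ w m₀ := Finset.inf'_le _ (Finset.mem_range.2 (by omega))
        rw [hw] at h2; simp only [h, if_false] at h2; exact h2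
      have h3 := tail_bd t
      have h4 := mul_le_mul h1 h3 (by norm_num) (abs_nonneg (qPoch c q m₀))
      linarith

lemma one_sub_q_pow_pos {q : ℝ} (hq : 0 < q) (hq1 : q < 1) (k : ℕ) : 0 < 1 - q * q ^ k := by
  have : q * q ^ k ≤ q * 1 := by
    gcongr; exact pow_le_one₀ hq.le hq1.le
  linarith

lemma qBinom_zero {q : ℝ} (hq : 0 < q) (hq1 : q < 1) (n : ℕ) : qBinom q n 0 = 1 := by
  unfold qBinom
  rw [qPoch_zero, Nat.sub_zero, one_mul, div_self (ne_of_gt (qPoch_q_pos hq hq1 n))]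

lemma qBinom_self {q : ℝ} (hq : 0 < q) (hq1 : q < 1) (n : ℕ) : qBinom q n n = 1 := by
  unfold qBinom
  rw [Nat.sub_self, qPoch_zero, mul_one, div_self (ne_of_gt (qPoch_q_pos hq hq1 n))]

lemma pascal {q : ℝ} (hq : 0 < q) (hq1 : q < 1) {n j : ℕ} (hj : j < n) :
    qBinom q (n+1) (j+1) = qBinom q n (j+1) + q ^ (n - j) * qBinom q n j := by
  obtain ⟨d, rfl⟩ : ∃ d, n = j + d + 1 := ⟨n - j - 1, by omega⟩
  unfold qBinom
  have e1 : j + d + 1 + 1 - (j + 1) = d + 1 := by omega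
  have e2 : j + d + 1 - (j + 1) = d := by omega
  have e3 : j + d + 1 - j = d + 1 := by omega
  rw [e1, e2, e3]
  have h1 : qPoch q q (j + d + 1 + 1) = qPoch q q (j + d + 1) * (1 - q * q ^ (j + d + 1)) :=
    qPoch_succ q q (j + d + 1)
  have h2 : qPoch q q (j + 1) = qPoch q q j * (1 - q * q ^ j) := qPoch_succ q q j
  have h3 : qPoch q q (d + 1) = qPoch q q d * (1 - q * q ^ d) := qPoch_succ q q d
  rw [h1, h2, h3]
  have nz1 := ne_of_gt (qPoch_q_pos hq hq1 j)
  have nz2 := ne_of_gt (qPoch_q_pos hq hq1 d)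
  have nz3 := ne_of_gt (one_sub_q_pow_pos hq hq1 j)
  have nz4 := ne_of_gt (one_sub_q_pow_pos hq hq1 d)
  field_simp
  ring

lemma choose_two_succ (m : ℕ) : (m+1).choose 2 = m.choose 2 + m := by
  rw [Nat.choose_succ_succ, Nat.choose_one_right, Nat.add_comm]

lemma qbinom_thm {q : ℝ} (hq : 0 < q) (hq1 : q < 1) (z : ℝ) (n : ℕ) :
    ∑ m ∈ Finset.range (n+1), (-1:ℝ)^m * q ^ (m.choose 2) * qBinom q n m * z^m
      = qPoch z q n := by
  induction n with
  | zero => simp [qBinom_zero hq hq1, qPoch_zero]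
  | succ n ih =>
    set T : ℕ → ℕ → ℝ := fun N m => (-1:ℝ)^m * q ^ (m.choose 2) * qBinom q N m * z^m with hT
    have key : ∀ j ∈ Finset.range n, T (n+1) (j+1) = T n (j+1) + (-(z * q^n)) * T n j := by
      intro j hj
      have hjn := Finset.mem_range.1 hj
      rw [hT]
      simp only
      rw [pascal hq hq1 hjn, choose_two_succ]
      obtain ⟨p, hp⟩ : ∃ p, n - j = p := ⟨n - j, rfl⟩
      have hjp : j + p = n := by omega
      rw [hp, ← hjp]
      rw [pow_add (-1:ℝ) j 1, pow_add q (j.choose 2) j, pow_add z j 1, pow_add q j p]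
      ring
    have hsum1 : ∑ m ∈ Finset.range (n+1+1), T (n+1) m
        = (∑ j ∈ Finset.range (n+1), T (n+1) j) + T (n+1) (n+1) := Finset.sum_range_succ _ _
    have hsum2 : ∑ j ∈ Finset.range (n+1), T (n+1) j
        = (∑ j ∈ Finset.range n, T (n+1) (j+1)) + T (n+1) 0 := Finset.sum_range_succ' _ _
    have hsum3 : ∑ j ∈ Finset.range n, T (n+1) (j+1)
        = (∑ j ∈ Finset.range n, T n (j+1)) + (-(z * q^n)) * ∑ j ∈ Finset.range n, T n j := by
      rw [Finset.sum_congr rfl key, Finset.sum_add_distrib, Finset.mul_sum]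
    have hsum4 : ∑ j ∈ Finset.range n, T n (j+1)
        = (∑ m ∈ Finset.range (n+1), T n m) - T n 0 := by
      rw [Finset.sum_range_succ' (fun m => T n m) n]; ring
    have hsum5 : ∑ j ∈ Finset.range n, T n j
        = (∑ m ∈ Finset.range (n+1), T n m) - T n n := by
      rw [Finset.sum_range_succ (fun m => T n m) n]; ring
    have hT0 : ∀ N, T N 0 = 1 := by
      intro N; rw [hT]; simp [qBinom_zero hq hq1]
    have hTtop : T (n+1) (n+1) = -(z * q^n) * T n n := by
      rw [hT]
      simp only
      rw [qBinom_self hq hq1, qBinom_self hq hq1, choose_two_succ]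
      rw [pow_add (-1:ℝ) n 1, pow_add q (n.choose 2) n, pow_add z n 1]
      ring
    have hfin : qPoch z q (n+1) = qPoch z q n * (1 - z * q^n) := qPoch_succ z q n
    calc ∑ m ∈ Finset.range (n+1+1), T (n+1) m
        = (∑ m ∈ Finset.range (n+1), T n m) * (1 - z * q^n)
          - T n 0 - (-(z*q^n)) * T n n + T (n+1) 0 + T (n+1) (n+1) := by
          rw [hsum1, hsum2, hsum3, hsum4, hsum5]; ring
      _ = qPoch z q n * (1 - z * q^n) := by
          rw [hT0, hT0, hTtop, ih]; ring
      _ = qPoch z q (n+1) := hfin.symm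

lemma summable_aux {q : ℝ} (hq : 0 < q) (hq1 : q < 1) (r : ℝ) (hr : 0 ≤ r) :
    Summable (fun m : ℕ => q ^ (m.choose 2) * r ^ m) := by
  apply summable_of_ratio_norm_eventually_le (r := 1/2) (by norm_num)
  have ht : Filter.Tendsto (fun m : ℕ => q ^ m * r) atTop (nhds 0) := by
    simpa using (tendsto_pow_atTop_nhds_zero_of_lt_one hq.le hq1).mul_const r
  filter_upwards [ht.eventually (eventually_le_nhds (by norm_num : (0:ℝ) < 1/2))] with m hm
  have e : q ^ ((m+1).choose 2) * r ^ (m+1) = (q^m * r) * (q ^ (m.choose 2) * r ^ m) := by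
    rw [choose_two_succ, pow_add, pow_succ]; ring
  rw [Real.norm_eq_abs, Real.norm_eq_abs, e, abs_of_nonneg (by positivity),
    abs_of_nonneg (by positivity)]
  exact mul_le_mul_of_nonneg_right hm (by positivity)

lemma reindex {q a b x y : ℝ} (hq : 0 < q) (hx : x ≠ 0) (n : ℕ) :
    littleQJacobi q a b n x y / ((-x) ^ n * q ^ ((n : ℝ) * (1 - (n : ℝ)) / 2))
    = ∑ m ∈ Finset.range (n+1),
        ((-1:ℝ)^m * q ^ (m.choose 2) * qBinom q n m * (y/x)^m)
        * (qPoch (a * b * q ^ (n + 1)) q (n-m) / qPoch (a * q) q (n-m)) := by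
  unfold littleQJacobi
  rw [Finset.sum_div, ← Finset.sum_range_reflect]
  apply Finset.sum_congr rfl
  intro m hmr
  have hm : m ≤ n := by
    have := Finset.mem_range.1 hmr; omega
  simp only [Nat.add_sub_cancel]
  have h1 : n - (n - m) = m := by omega
  have h2 : qBinom q n (n - m) = qBinom q n m := by
    unfold qBinom
    rw [h1, mul_comm]
  have hWpos : (0:ℝ) < q ^ ((n : ℝ) * (1 - (n : ℝ)) / 2) := Real.rpow_pos_of_pos hq _
  have h3 : q ^ ((((n - m : ℕ) : ℝ) * (((n - m : ℕ) : ℝ) + 1 - 2 * (n : ℝ))) / 2)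
      = q ^ ((n : ℝ) * (1 - (n : ℝ)) / 2) * q ^ (m.choose 2) := by
    rw [← Real.rpow_natCast q (m.choose 2), ← Real.rpow_add hq]
    congr 1
    rw [Nat.cast_choose_two, Nat.cast_sub hm]
    ring
  rw [h1, h2, h3]
  obtain ⟨k, hk⟩ : ∃ k, n = m + k := ⟨n - m, by omega⟩
  have hk' : n - m = k := by omega
  rw [hk', hk]
  rw [neg_pow x (m + k), div_pow]
  have hW0 : q ^ ((↑(m + k) : ℝ) * (1 - (↑(m + k) : ℝ)) / 2) ≠ 0 :=
    ne_of_gt (Real.rpow_pos_of_pos hq _)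
  generalize hWg : q ^ ((↑(m + k) : ℝ) * (1 - (↑(m + k) : ℝ)) / 2) = W at hW0 ⊢
  have hden : ((-1:ℝ))^(m+k) * x^(m+k) * W ≠ 0 :=
    mul_ne_zero (mul_ne_zero (pow_ne_zero _ (by norm_num)) (pow_ne_zero _ hx)) hW0
  rw [div_eq_iff hden]
  have hxx : y^m / x^m * x^(m+k) = y^m * x^k := by
    rw [pow_add]; field_simp
  have hsign : ((-1:ℝ))^m * (-1)^(m+k) = (-1)^k := by
    rw [← pow_add]
    have h5 : m + (m+k) = 2*m + k := by ring
    rw [h5, pow_add, pow_mul]; norm_num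
  calc (-1) ^ k * (W * q ^ m.choose 2) * qBinom q (m + k) m *
          (qPoch (a * b * q ^ (m + k + 1)) q k / qPoch (a * q) q k) * x ^ k * y ^ m
      = (-1) ^ k * q ^ m.choose 2 * qBinom q (m + k) m *
          (qPoch (a * b * q ^ (m + k + 1)) q k / qPoch (a * q) q k) * (y^m * x^k) * W := by
        ring
    _ = ((-1)^m * (-1)^(m+k)) * q ^ m.choose 2 * qBinom q (m + k) m *
          (qPoch (a * b * q ^ (m + k + 1)) q k / qPoch (a * q) q k) *
          (y^m / x^m * x^(m+k)) * W := by rw [hsign, hxx]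
    _ = (-1) ^ m * q ^ m.choose 2 * qBinom q (m + k) m * (y ^ m / x ^ m) *
          (qPoch (a * b * q ^ (m + k + 1)) q k / qPoch (a * q) q k) *
          ((-1) ^ (m + k) * x ^ (m + k) * W) := by ring

theorem littleQJacobi_asymptotic (q a b x y : ℝ) (hq : 0 < q) (hq1 : q < 1)
    (hx : x ≠ 0) (hx' : ∀ k : ℕ, x ≠ q ^ k) :
    Filter.Tendsto
      (fun n : ℕ =>
        littleQJacobi q a b n x y / ((-x) ^ n * q ^ ((n : ℝ) * (1 - (n : ℝ)) / 2)))
      Filter.atTop (nhds (qPochInf (y / x) q / qPochInf (a * q) q)) := by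
  set z := y / x with hz
  obtain ⟨ε₁, hε₁, hε₁k⟩ := qPoch_lower hq hq1 (a * q)
  obtain ⟨ε₂, hε₂, hε₂k⟩ := qPoch_lower hq hq1 q
  have hqq_pos : ∀ k, 0 < qPoch q q k := qPoch_q_pos hq hq1
  have hε₂k' : ∀ k, ε₂ ≤ qPoch q q k := by
    intro k
    rcases hε₂k k with h | h
    · exact absurd h (ne_of_gt (hqq_pos k))
    · rwa [abs_of_pos (hqq_pos k)] at h
  have hBbd : ∀ n m : ℕ, qBinom q n m ≤ 1 / (ε₂ * ε₂) := by
    intro n m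
    unfold qBinom
    apply div_le_div₀ (by positivity) (qPoch_q_le_one hq hq1 n) (by positivity)
    exact mul_le_mul (hε₂k' m) (hε₂k' (n - m)) hε₂.le (hqq_pos m).le
  have hBpos : ∀ n m : ℕ, 0 < qBinom q n m := fun n m =>
    div_pos (hqq_pos _) (mul_pos (hqq_pos _) (hqq_pos _))
  set D := Real.exp (|a * b| / (1 - q)) with hD
  have hDpos : 0 < D := Real.exp_pos _
  have hnum : ∀ n k : ℕ, |qPoch (a * b * q ^ (n+1)) q k| ≤ D := by
    intro n k
    calc |qPoch (a * b * q ^ (n+1)) q k| ≤ Real.exp (|a * b * q ^ (n+1)| / (1 - q)) :=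
          abs_qPoch_le hq hq1 _ k
      _ ≤ D := by
          rw [hD]
          apply Real.exp_le_exp.2
          have h1 : |a * b * q ^ (n+1)| ≤ |a * b| := by
            rw [abs_mul, abs_pow, abs_of_pos hq]
            exact mul_le_of_le_one_right (abs_nonneg _) (pow_le_one₀ hq.le hq1.le)
          apply div_le_div₀ (abs_nonneg _) h1 (by linarith) le_rfl
  set R : ℕ → ℕ → ℝ :=
    fun n m => qPoch (a * b * q ^ (n+1)) q (n - m) / qPoch (a * q) q (n - m) with hR
  set cL : ℝ := (qPochInf (a * q) q)⁻¹ with hcL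
  have hRbd : ∀ n m : ℕ, |R n m| ≤ D / ε₁ := by
    intro n m
    rcases hε₁k (n - m) with h | h
    · rw [hR]; simp only [h, div_zero, abs_zero]; positivity
    · rw [hR]
      simp only [abs_div]
      apply div_le_div₀ hDpos.le (hnum n (n - m)) hε₁ h
  have hnum1 : ∀ m : ℕ, Filter.Tendsto
      (fun n => qPoch (a * b * q ^ (n+1)) q (n - m)) atTop (nhds 1) := by
    intro m
    have hu : Filter.Tendsto (fun n : ℕ => Real.exp (|a * b| * q ^ (n+1) / (1 - q)) - 1)
        atTop (nhds 0) := by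
      have h1 : Filter.Tendsto (fun n : ℕ => |a * b| * q ^ (n+1) / (1 - q)) atTop (nhds 0) := by
        have h2 : Filter.Tendsto (fun n : ℕ => q ^ (n+1)) atTop (nhds 0) :=
          (tendsto_pow_atTop_nhds_zero_of_lt_one hq.le hq1).comp (tendsto_add_atTop_nat 1)
        have h3 := (h2.const_mul |a * b|).div_const (1 - q)
        simpa using h3
      have h4 := (Real.continuous_exp.tendsto 0).comp h1
      simp only [Function.comp_def, Real.exp_zero] at h4
      have h5 := h4.sub_const 1
      simpa using h5
    have hsq : Filter.Tendsto
        (fun n => qPoch (a * b * q ^ (n+1)) q (n - m) - 1) atTop (nhds 0) := by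
      apply squeeze_zero_norm _ hu
      intro n
      calc ‖qPoch (a * b * q ^ (n+1)) q (n - m) - 1‖
          = |qPoch (a * b * q ^ (n+1)) q (n - m) - 1| := rfl
        _ ≤ Real.exp (|a * b * q ^ (n+1)| / (1 - q)) - 1 := abs_qPoch_sub_one_le hq hq1 _ _
        _ = Real.exp (|a * b| * q ^ (n+1) / (1 - q)) - 1 := by
            rw [abs_mul, abs_pow, abs_of_pos hq]
    have h7 := hsq.add_const 1
    simpa using h7
  have hRlim : ∀ m : ℕ, Filter.Tendsto (fun n => R n m) atTop (nhds cL) := by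
    by_cases hdeg : ∃ j : ℕ, 1 - (a * q) * q ^ j = 0
    · obtain ⟨j0, hj0⟩ := hdeg
      have hL0 : qPochInf (a * q) q = 0 := qPochInf_eq_zero hq hq1 hj0
      intro m
      have hcL0 : cL = 0 := by rw [hcL, hL0, inv_zero]
      rw [hcL0]
      apply Filter.Tendsto.congr' _ tendsto_const_nhds
      filter_upwards [Filter.eventually_ge_atTop (m + j0 + 1)] with n hn
      have hz0 : qPoch (a * q) q (n - m) = 0 := qPoch_eq_zero hj0 (by omega)
      rw [hR]; simp only [hz0, div_zero]
    · push_neg at hdeg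
      have hne : ∀ k, qPoch (a * q) q k ≠ 0 := by
        intro k
        unfold qPoch
        rw [Finset.prod_ne_zero_iff]
        exact fun j _ => hdeg j
      have habs : ∀ k, ε₁ ≤ |qPoch (a * q) q k| := by
        intro k
        rcases hε₁k k with h | h
        · exact absurd h (hne k)
        · exact h
      have hLlim : Filter.Tendsto (fun k => qPoch (a * q) q k) atTop
          (nhds (qPochInf (a * q) q)) := tendsto_qPoch hq hq1 (a * q)
      have hLne : qPochInf (a * q) q ≠ 0 := by
        have h6 : ε₁ ≤ |qPochInf (a * q) q| := ge_of_tendsto' hLlim.abs habs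
        intro hc0
        rw [hc0] at h6
        simp at h6
        linarith
      intro m
      have hden1 : Filter.Tendsto (fun n => qPoch (a * q) q (n - m)) atTop
          (nhds (qPochInf (a * q) q)) := hLlim.comp (tendsto_sub_atTop_nat m)
      have := (hnum1 m).div hden1 hLne
      rw [hcL]
      simpa [one_div, hR, Pi.div_def] using this
  set F : ℕ → ℕ → ℝ := fun n m => (-1:ℝ)^m * q ^ (m.choose 2) * qBinom q n m * z^m with hF
  have hFbd : ∀ n m : ℕ, |F n m| ≤ (1/(ε₂*ε₂)) * (q^(m.choose 2) * |z|^m) := by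
    intro n m
    rw [hF]
    simp only
    rw [abs_mul, abs_mul, abs_mul, abs_pow, abs_pow, abs_pow, abs_neg, abs_one, one_pow,
      one_mul, abs_of_pos hq, abs_of_pos (hBpos n m)]
    calc q ^ m.choose 2 * qBinom q n m * |z| ^ m
        ≤ q ^ m.choose 2 * (1/(ε₂*ε₂)) * |z| ^ m := by
          gcongr
          exact hBbd n m
      _ = (1/(ε₂*ε₂)) * (q^(m.choose 2) * |z|^m) := by ring
  set fb : ℕ → ℕ → ℝ := fun n m => if m ≤ n then F n m * (R n m - cL) else 0 with hfb
  set bound : ℕ → ℝ := fun m => (1/(ε₂*ε₂)) * (q^(m.choose 2) * |z|^m) * (D/ε₁ + |cL|)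
    with hbound
  have hboundsum : Summable bound := by
    rw [hbound]
    exact ((summable_aux hq hq1 |z| (abs_nonneg z)).mul_left _).mul_right _
  have hfb_bd : ∀ n m : ℕ, ‖fb n m‖ ≤ bound m := by
    intro n m
    rw [hfb, hbound]
    simp only
    split_ifs with h
    · rw [Real.norm_eq_abs, abs_mul]
      have h2 : |R n m - cL| ≤ D/ε₁ + |cL| := by
        rw [sub_eq_add_neg]
        calc |R n m + -cL| ≤ |R n m| + |-cL| := abs_add_le _ _
          _ ≤ D/ε₁ + |cL| := by rw [abs_neg]; linarith [hRbd n m]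
      exact mul_le_mul (hFbd n m) h2 (abs_nonneg _) (by positivity)
    · rw [norm_zero]; positivity
  have hfb_lim : ∀ m : ℕ, Filter.Tendsto (fun n => fb n m) atTop (nhds 0) := by
    intro m
    have hRm : Filter.Tendsto (fun n => |R n m - cL|) atTop (nhds 0) := by
      have h8 := (hRlim m).sub_const cL
      simp only [sub_self] at h8
      simpa using h8.abs
    apply squeeze_zero_norm' ?_ (by
      have h9 := hRm.const_mul ((1/(ε₂*ε₂)) * (q^(m.choose 2) * |z|^m))
      simpa only [mul_zero] using h9)
    filter_upwards [Filter.eventually_ge_atTop m] with n hn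
    rw [hfb]
    simp only [if_pos hn]
    rw [Real.norm_eq_abs, abs_mul]
    exact mul_le_mul_of_nonneg_right (hFbd n m) (abs_nonneg _)
  have hTannery : Filter.Tendsto (fun n => ∑' m, fb n m) atTop (nhds 0) := by
    have h0 : (0:ℝ) = ∑' (_ : ℕ), (0:ℝ) := tsum_zero.symm
    rw [h0]
    exact tendsto_tsum_of_dominated_convergence hboundsum hfb_lim
      (Filter.Eventually.of_forall (fun n => hfb_bd n))
  have hBsum : ∀ n, ∑ m ∈ Finset.range (n+1), F n m * (R n m - cL) = ∑' m, fb n m := by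
    intro n
    rw [tsum_eq_sum (s := Finset.range (n+1))
      (fun m hm => by
        rw [hfb]; simp only
        rw [if_neg (by simp only [Finset.mem_range] at hm; omega)])]
    apply Finset.sum_congr rfl
    intro m hm
    have hmn : m ≤ n := by simp only [Finset.mem_range] at hm; omega
    rw [hfb]; simp only [if_pos hmn]
  have key : ∀ n, littleQJacobi q a b n x y / ((-x) ^ n * q ^ ((n:ℝ)*(1-(n:ℝ))/2))
      = qPoch z q n * cL + ∑' m, fb n m := by
    intro n
    rw [reindex hq hx n, ← hz, ← hBsum n, ← qbinom_thm hq hq1 z n]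
    rw [Finset.sum_mul, ← Finset.sum_add_distrib]
    apply Finset.sum_congr rfl
    intro m hm
    rw [hF, hR]
    simp only
    ring
  have hfinal : Filter.Tendsto (fun n => qPoch z q n * cL + ∑' m, fb n m) atTop
      (nhds (qPochInf z q * cL + 0)) := ((tendsto_qPoch hq hq1 z).mul_const cL).add hTannery
  have heq : qPochInf z q * cL + 0 = qPochInf z q / qPochInf (a * q) q := by
    rw [add_zero, hcL, div_eq_mul_inv]
  rw [heq] at hfinal
  exact hfinal.congr (fun n => (key n).symm)
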